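/- arXiv:2605.21317 — 2 statements merged into one kernel-verified Lean document; each statement's English description precedes it below -/
import Mathlib

section
/- (Common descent certificate.) Let d, N ≥ 1, let f_1, …, f_N : ℝ^d → ℝ be differentiable with L-Lipschitz gradients and ‖∇f_i(θ)‖ ≤ G_f for all i, θ. Let ρ_1, …, ρ_N > 0 with Σ ρ_i = 1, F = Σ ρ_i f_i, ρ_min = min_i ρ_i, c = ρ_min / G_f. Fix η_l > 0, local step counts K_i ≥ 1 with K_max = max_i K_i, a point θ ∈ ℝ^d, and let g_i = η_l Σ_{k=0}^{K_i−1} ∇f_i(θ_i^{k}) be the accumulated client updates of the local gradient-descent trajectories θ_i^{0} = θ, θ_i^{k+1} = θ_i^{k} − η_l ∇f_i(θ_i^{k}). Suppose each g_i ≠ 0 and a vector g ∈ ℝ^d satisfies the exact alignment constraints ⟨g_i/‖g_i‖, g⟩ = ρ_i for all i, together with ‖g‖ ≤ G. Then ⟨∇F(θ), g⟩ ≥ c‖∇F(θ)‖² − B_drift · η_l (K_max − 1), where B_drift = (L G_f / 2)(G + Σ_{i=1}^N ρ_i²). -/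
open scoped InnerProductSpace BigOperators

/-- Local gradient-descent trajectory. -/
noncomputable def traj {E : Type*} [NormedAddCommGroup E] [InnerProductSpace ℝ E]
    [CompleteSpace E] (f : E → ℝ) (ηl : ℝ) (θ : E) : ℕ → E
  | 0 => θ
  | k + 1 => traj f ηl θ k - ηl • gradient f (traj f ηl θ k)

set_option maxHeartbeats 1000000

private lemma sum_range_cast_real (n : ℕ) :
    ∑ k ∈ Finset.range n, (k : ℝ) = n * ((n : ℝ) - 1) / 2 := by
  induction n with
  | zero => simp
  | succ n ih => rw [Finset.sum_range_succ, ih]; push_cast; ring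

private lemma gradient_weighted_sum {E : Type*} [NormedAddCommGroup E]
    [InnerProductSpace ℝ E] [CompleteSpace E] {N : ℕ} (ρ : Fin N → ℝ)
    (f : Fin N → E → ℝ) (θ : E) (h : ∀ i, Differentiable ℝ (f i)) :
    gradient (fun x => ∑ i, ρ i * f i x) θ = ∑ i, ρ i • gradient (f i) θ := by
  have h1 : ∀ i : Fin N, HasFDerivAt (fun x => ρ i * f i x)
      (ρ i • (InnerProductSpace.toDual ℝ E (gradient (f i) θ) : E →L[ℝ] ℝ)) θ := by
    intro i
    exact ((h i θ).hasGradientAt.hasFDerivAt).const_mul (ρ i)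
  have h2 : HasFDerivAt (fun x => ∑ i, ρ i * f i x)
      (∑ i, ρ i • (InnerProductSpace.toDual ℝ E (gradient (f i) θ) : E →L[ℝ] ℝ)) θ :=
    HasFDerivAt.fun_sum (fun i _ => h1 i)
  have h3 : (∑ i, ρ i • (InnerProductSpace.toDual ℝ E (gradient (f i) θ) : E →L[ℝ] ℝ))
      = InnerProductSpace.toDual ℝ E (∑ i, ρ i • gradient (f i) θ) := by
    simp [map_sum, map_smul]
  rw [h3] at h2
  rw [h2.hasGradientAt.gradient, LinearIsometryEquiv.symm_apply_apply]

private lemma traj_dist {E : Type*} [NormedAddCommGroup E] [InnerProductSpace ℝ E]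
    [CompleteSpace E] (f : E → ℝ) (ηl Gf : ℝ) (hηl : 0 ≤ ηl)
    (hGf : ∀ x, ‖gradient f x‖ ≤ Gf) (θ : E) :
    ∀ k : ℕ, ‖θ - traj f ηl θ k‖ ≤ ηl * k * Gf := by
  intro k
  induction k with
  | zero => simp [traj]
  | succ k ih =>
    have h1 : θ - traj f ηl θ (k + 1)
        = (θ - traj f ηl θ k) + ηl • gradient f (traj f ηl θ k) := by
      simp [traj]; abel
    rw [h1]
    have h2 : ‖ηl • gradient f (traj f ηl θ k)‖ ≤ ηl * Gf := by
      rw [norm_smul, Real.norm_eq_abs, abs_of_nonneg hηl]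
      exact mul_le_mul_of_nonneg_left (hGf _) hηl
    calc ‖(θ - traj f ηl θ k) + ηl • gradient f (traj f ηl θ k)‖
        ≤ ‖θ - traj f ηl θ k‖ + ‖ηl • gradient f (traj f ηl θ k)‖ := norm_add_le _ _
      _ ≤ ηl * k * Gf + ηl * Gf := add_le_add ih h2
      _ = ηl * (k + 1 : ℕ) * Gf := by push_cast; ring

/-- **Common descent certificate.** If the aggregate `g` satisfies the exact alignment
constraints `⟪gᵢ/‖gᵢ‖, g⟫ = ρᵢ` with the accumulated client updates `gᵢ`, and `‖g‖ ≤ G`,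
then `⟪∇F(θ), g⟫ ≥ c‖∇F(θ)‖² − B_drift ηl (K_max − 1)`, where `c = ρ_min/G_f` and
`B_drift = (L G_f/2)(G + Σ ρᵢ²)`. -/
theorem common_descent_certificate {d N : ℕ} (hd : 1 ≤ d) (hN : 1 ≤ N)
    (f : Fin N → EuclideanSpace ℝ (Fin d) → ℝ) (L Gf : ℝ)
    (hdiff : ∀ i, Differentiable ℝ (f i))
    (hLip : ∀ i x y, ‖gradient (f i) x - gradient (f i) y‖ ≤ L * ‖x - y‖)
    (hGf : ∀ i x, ‖gradient (f i) x‖ ≤ Gf)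
    (ρ : Fin N → ℝ) (hρpos : ∀ i, 0 < ρ i) (hρsum : ∑ i, ρ i = 1)
    (F : EuclideanSpace ℝ (Fin d) → ℝ) (hF : F = fun x => ∑ i, ρ i * f i x)
    (ρmin : ℝ) (hρminlb : ∀ i, ρmin ≤ ρ i) (hρminmem : ∃ i, ρ i = ρmin)
    (c : ℝ) (hc : c = ρmin / Gf)
    (ηl : ℝ) (hηl : 0 < ηl)
    (K : Fin N → ℕ) (hK : ∀ i, 1 ≤ K i)
    (Kmax : ℕ) (hKmaxub : ∀ i, K i ≤ Kmax) (hKmaxmem : ∃ i, K i = Kmax)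
    (θ : EuclideanSpace ℝ (Fin d))
    (gI : Fin N → EuclideanSpace ℝ (Fin d))
    (hgI : ∀ i, gI i = ηl • ∑ k ∈ Finset.range (K i),
        gradient (f i) (traj (f i) ηl θ k))
    (hne : ∀ i, gI i ≠ 0)
    (g : EuclideanSpace ℝ (Fin d))
    (halign : ∀ i, ⟪‖gI i‖⁻¹ • gI i, g⟫_ℝ = ρ i)
    (G : ℝ) (hG : ‖g‖ ≤ G)
    (Bdrift : ℝ) (hB : Bdrift = L * Gf / 2 * (G + ∑ i, (ρ i) ^ 2)) :
    c * ‖gradient F θ‖ ^ 2 - Bdrift * (ηl * ((Kmax : ℝ) - 1)) ≤ ⟪gradient F θ, g⟫_ℝ := by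
  classical
  set v : Fin N → EuclideanSpace ℝ (Fin d) := fun i => gradient (f i) θ with hv
  set s : Fin N → EuclideanSpace ℝ (Fin d) := fun i =>
    ∑ k ∈ Finset.range (K i), gradient (f i) (traj (f i) ηl θ k) with hs
  have hgIs : ∀ i, gI i = ηl • s i := hgI
  -- basic positivity facts
  have i0 : Fin N := ⟨0, hN⟩
  have hGf0 : 0 < Gf := by
    have h1 : 0 < ‖gI i0‖ := norm_pos_iff.mpr (hne i0)
    have h2 : ‖gI i0‖ ≤ ηl * ((K i0 : ℝ) * Gf) := by
      rw [hgIs i0, norm_smul, Real.norm_eq_abs, abs_of_pos hηl]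
      refine mul_le_mul_of_nonneg_left ?_ hηl.le
      calc ‖s i0‖ ≤ ∑ k ∈ Finset.range (K i0), ‖gradient (f i0) (traj (f i0) ηl θ k)‖ :=
            norm_sum_le _ _
        _ ≤ ∑ _k ∈ Finset.range (K i0), Gf := Finset.sum_le_sum (fun k _ => hGf _ _)
        _ = (K i0 : ℝ) * Gf := by rw [Finset.sum_const, Finset.card_range]; ring
    have hKpos : (0 : ℝ) < (K i0 : ℝ) := by exact_mod_cast hK i0
    nlinarith [mul_pos hηl hKpos]
  have hL0 : 0 ≤ L := by
    have j0 : Fin d := ⟨0, hd⟩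
    have h1 := hLip i0 (EuclideanSpace.single j0 (1 : ℝ)) 0
    have h2 : ‖(EuclideanSpace.single j0 (1 : ℝ)) - 0‖ = 1 := by
      simp [EuclideanSpace.norm_single]
    rw [h2, mul_one] at h1
    exact le_trans (norm_nonneg _) h1
  have hG0 : 0 ≤ G := le_trans (norm_nonneg g) hG
  have hρmin0 : 0 < ρmin := by obtain ⟨i, hi⟩ := hρminmem; exact hi ▸ hρpos i
  have hKmax1 : 1 ≤ Kmax := by obtain ⟨i, hi⟩ := hKmaxmem; exact hi ▸ hK i
  -- the drift constant
  set D : ℝ := L * ηl * Gf * (((Kmax : ℝ) - 1) / 2) with hD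
  have hD0 : 0 ≤ D := by
    have : (1 : ℝ) ≤ (Kmax : ℝ) := by exact_mod_cast hKmax1
    have h1 : 0 ≤ ((Kmax : ℝ) - 1) / 2 := by linarith
    positivity
  -- gradient of F
  have hgradF : gradient F θ = ∑ i, ρ i • v i := by
    rw [hF]; exact gradient_weighted_sum ρ f θ hdiff
  have hnormv : ∀ i, ‖v i‖ ≤ Gf := fun i => hGf i θ
  have hnormF : ‖gradient F θ‖ ≤ Gf := by
    rw [hgradF]
    calc ‖∑ i, ρ i • v i‖ ≤ ∑ i, ‖ρ i • v i‖ := norm_sum_le _ _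
      _ ≤ ∑ i, ρ i * Gf := by
          refine Finset.sum_le_sum (fun i _ => ?_)
          rw [norm_smul, Real.norm_eq_abs, abs_of_pos (hρpos i)]
          exact mul_le_mul_of_nonneg_left (hnormv i) (hρpos i).le
      _ = Gf := by rw [← Finset.sum_mul, hρsum, one_mul]
  -- per-client lower bound
  have key : ∀ i, ρ i ^ 2 * ‖v i‖ - ρ i * (D * (G + ρ i)) ≤ ρ i * ⟪v i, g⟫_ℝ := by
    intro i
    have hKi : (0 : ℝ) < (K i : ℝ) := by exact_mod_cast hK i
    -- alignment gives ⟪s i, g⟫ = ρ i * ‖s i‖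
    have hsne : s i ≠ 0 := by
      intro h; exact hne i (by rw [hgIs i, h, smul_zero])
    have hsnorm : (0 : ℝ) < ‖s i‖ := norm_pos_iff.mpr hsne
    have hn : ‖gI i‖ ≠ 0 := (norm_pos_iff.mpr (hne i)).ne'
    have hgInorm : ‖gI i‖ = ηl * ‖s i‖ := by
      rw [hgIs i, norm_smul, Real.norm_eq_abs, abs_of_pos hηl]
    have hsig : ⟪s i, g⟫_ℝ = ρ i * ‖s i‖ := by
      have h1 := halign i
      rw [real_inner_smul_left] at h1
      have h2 : ⟪gI i, g⟫_ℝ = ‖gI i‖ * ρ i := (inv_mul_eq_iff_eq_mul₀ hn).mp h1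
      rw [hgInorm, hgIs i, real_inner_smul_left] at h2
      have h3 : ηl * ⟪s i, g⟫_ℝ = ηl * (‖s i‖ * ρ i) := by rw [h2]; ring
      have h4 := mul_left_cancel₀ hηl.ne' h3
      linarith
    -- drift bound
    have hdrift : ‖(K i : ℝ) • v i - s i‖ ≤ L * ηl * Gf * ((K i : ℝ) * ((K i : ℝ) - 1) / 2) := by
      have h1 : (K i : ℝ) • v i - s i
          = ∑ k ∈ Finset.range (K i), (v i - gradient (f i) (traj (f i) ηl θ k)) := by
        rw [Finset.sum_sub_distrib, Finset.sum_const, Finset.card_range, hs]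
        simp [Nat.cast_smul_eq_nsmul]
      rw [h1]
      calc ‖∑ k ∈ Finset.range (K i), (v i - gradient (f i) (traj (f i) ηl θ k))‖
          ≤ ∑ k ∈ Finset.range (K i), ‖v i - gradient (f i) (traj (f i) ηl θ k)‖ :=
            norm_sum_le _ _
        _ ≤ ∑ k ∈ Finset.range (K i), L * (ηl * k * Gf) := by
            refine Finset.sum_le_sum (fun k _ => ?_)
            calc ‖v i - gradient (f i) (traj (f i) ηl θ k)‖
                ≤ L * ‖θ - traj (f i) ηl θ k‖ := hLip i θ _
              _ ≤ L * (ηl * k * Gf) := by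
                  refine mul_le_mul_of_nonneg_left ?_ hL0
                  exact traj_dist (f i) ηl Gf hηl.le (hGf i) θ k
        _ = L * ηl * Gf * ((K i : ℝ) * ((K i : ℝ) - 1) / 2) := by
            have hterm : ∀ k : ℕ, L * (ηl * (k : ℝ) * Gf) = (L * ηl * Gf) * (k : ℝ) := by
              intro k; ring
            rw [Finset.sum_congr rfl fun k _ => hterm k, ← Finset.mul_sum, sum_range_cast_real]
            try ring
    set E : ℝ := L * ηl * Gf * ((K i : ℝ) * ((K i : ℝ) - 1) / 2) with hE
    -- lower bound on ⟪v i, g⟫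
    have hinner1 : (K i : ℝ) * ⟪v i, g⟫_ℝ ≥ ρ i * ‖s i‖ - E * G := by
      have h1 : (K i : ℝ) * ⟪v i, g⟫_ℝ = ⟪s i, g⟫_ℝ + ⟪(K i : ℝ) • v i - s i, g⟫_ℝ := by
        rw [inner_sub_left, real_inner_smul_left]; ring
      have h2 : ⟪(K i : ℝ) • v i - s i, g⟫_ℝ ≥ -(E * G) := by
        have := abs_real_inner_le_norm ((K i : ℝ) • v i - s i) g
        have h3 : ‖(K i : ℝ) • v i - s i‖ * ‖g‖ ≤ E * G := by
          apply mul_le_mul hdrift hG (norm_nonneg g)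
          exact le_trans (norm_nonneg _) hdrift
        nlinarith [abs_nonneg (⟪(K i : ℝ) • v i - s i, g⟫_ℝ), neg_abs_le (⟪(K i : ℝ) • v i - s i, g⟫_ℝ)]
      rw [h1, hsig]
      linarith
    have hsl : ‖s i‖ ≥ (K i : ℝ) * ‖v i‖ - E := by
      have h1 : ‖(K i : ℝ) • v i‖ ≤ ‖(K i : ℝ) • v i - s i‖ + ‖s i‖ := by
        have := norm_add_le ((K i : ℝ) • v i - s i) (s i)
        simpa using this
      rw [norm_smul, Real.norm_eq_abs, abs_of_pos hKi] at h1
      linarith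
    -- combine and divide by K i
    have hEK : E = (L * ηl * Gf * (((K i : ℝ) - 1) / 2)) * (K i : ℝ) := by rw [hE]; ring
    have hDi : L * ηl * Gf * (((K i : ℝ) - 1) / 2) ≤ D := by
      rw [hD]
      have h1 : (K i : ℝ) ≤ (Kmax : ℝ) := by exact_mod_cast hKmaxub i
      have h2 : 0 ≤ L * ηl * Gf := by positivity
      nlinarith
    have hρi := hρpos i
    have hvnn : 0 ≤ ‖v i‖ := norm_nonneg _
    -- K i * ⟪v i, g⟫ ≥ ρ i * (K‖v‖ − E) − E G = K (ρ‖v‖) − (ρ+G) E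
    have hmain : (K i : ℝ) * ⟪v i, g⟫_ℝ ≥
        (K i : ℝ) * (ρ i * ‖v i‖) - (ρ i + G) * ((L * ηl * Gf * (((K i : ℝ) - 1) / 2)) * (K i : ℝ)) := by
      have h1 : ρ i * ‖s i‖ ≥ ρ i * ((K i : ℝ) * ‖v i‖ - E) :=
        mul_le_mul_of_nonneg_left hsl hρi.le
      rw [← hEK]
      nlinarith
    have hdivided : ⟪v i, g⟫_ℝ ≥ ρ i * ‖v i‖ - (ρ i + G) * (L * ηl * Gf * (((K i : ℝ) - 1) / 2)) := by
      have := (mul_le_mul_iff_right₀ hKi).mp (by linarith [hmain] :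
        (K i : ℝ) * (ρ i * ‖v i‖ - (ρ i + G) * (L * ηl * Gf * (((K i : ℝ) - 1) / 2)))
          ≤ (K i : ℝ) * ⟪v i, g⟫_ℝ)
      linarith
    have hfinal : ⟪v i, g⟫_ℝ ≥ ρ i * ‖v i‖ - (ρ i + G) * D := by
      have h1 : (ρ i + G) * (L * ηl * Gf * (((K i : ℝ) - 1) / 2)) ≤ (ρ i + G) * D :=
        mul_le_mul_of_nonneg_left hDi (by linarith)
      linarith
    nlinarith [mul_le_mul_of_nonneg_left hfinal hρi.le]
  -- sum up
  have hsum : ⟪gradient F θ, g⟫_ℝ = ∑ i, ρ i * ⟪v i, g⟫_ℝ := by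
    rw [hgradF, sum_inner]
    exact Finset.sum_congr rfl (fun i _ => real_inner_smul_left _ _ _)
  have hlow : ∑ i, (ρ i ^ 2 * ‖v i‖ - ρ i * (D * (G + ρ i))) ≤ ⟪gradient F θ, g⟫_ℝ := by
    rw [hsum]; exact Finset.sum_le_sum (fun i _ => key i)
  have hsplit : ∑ i, (ρ i ^ 2 * ‖v i‖ - ρ i * (D * (G + ρ i)))
      = ∑ i, ρ i ^ 2 * ‖v i‖ - D * (G + ∑ i, ρ i ^ 2) := by
    have hterm : ∀ i : Fin N, ρ i ^ 2 * ‖v i‖ - ρ i * (D * (G + ρ i))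
        = ρ i ^ 2 * ‖v i‖ - (ρ i * (D * G) + D * ρ i ^ 2) := fun i => by ring
    rw [Finset.sum_congr rfl fun i _ => hterm i, Finset.sum_sub_distrib,
      Finset.sum_add_distrib, ← Finset.sum_mul, hρsum, ← Finset.mul_sum]
    ring
  -- lower bound the first sum by c ‖∇F‖²
  have hsq : c * ‖gradient F θ‖ ^ 2 ≤ ∑ i, ρ i ^ 2 * ‖v i‖ := by
    have h1 : ρmin * ∑ i, ρ i * ‖v i‖ ≤ ∑ i, ρ i ^ 2 * ‖v i‖ := by
      rw [Finset.mul_sum]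
      refine Finset.sum_le_sum (fun i _ => ?_)
      have hx : 0 ≤ (ρ i - ρmin) * (ρ i * ‖v i‖) :=
        mul_nonneg (by linarith [hρminlb i]) (mul_nonneg (hρpos i).le (norm_nonneg _))
      nlinarith [hx]
    have h2 : ‖gradient F θ‖ ≤ ∑ i, ρ i * ‖v i‖ := by
      rw [hgradF]
      calc ‖∑ i, ρ i • v i‖ ≤ ∑ i, ‖ρ i • v i‖ := norm_sum_le _ _
        _ = ∑ i, ρ i * ‖v i‖ := by
            refine Finset.sum_congr rfl (fun i _ => ?_)
            rw [norm_smul, Real.norm_eq_abs, abs_of_pos (hρpos i)]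
    have h3 : c * ‖gradient F θ‖ ^ 2 ≤ ρmin * ‖gradient F θ‖ := by
      rw [hc]
      have hn0 : 0 ≤ ‖gradient F θ‖ := norm_nonneg _
      rw [div_mul_eq_mul_div, div_le_iff₀ hGf0]
      have h5 : ρmin * ‖gradient F θ‖ * ‖gradient F θ‖ ≤ ρmin * ‖gradient F θ‖ * Gf :=
        mul_le_mul_of_nonneg_left hnormF (mul_nonneg hρmin0.le hn0)
      nlinarith [h5]
    have h4 : ρmin * ‖gradient F θ‖ ≤ ρmin * ∑ i, ρ i * ‖v i‖ :=
      mul_le_mul_of_nonneg_left h2 hρmin0.le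
    linarith
  -- identify the drift term
  have hdriftid : Bdrift * (ηl * ((Kmax : ℝ) - 1)) = D * (G + ∑ i, ρ i ^ 2) := by
    rw [hB, hD]; ring
  rw [hdriftid]
  rw [hsplit] at hlow
  linarith
end

section
/- (Approximate alignment under residual constraints.) Let f_1, …, f_N : ℝ^d → ℝ be L-smooth with ‖∇f_i‖ ≤ G_f, let ρ_i > 0 sum to 1 with ρ_min = min_i ρ_i, c = ρ_min/G_f, F = Σ ρ_i f_i, and F ≥ F⋆. Fix η_l, η_g > 0, K_i ≥ 1 with K_max = max_i K_i. Consider a server trajectory θ_{t+1} = θ_t − η_g g_t, where at each round t the nonzero accumulated client updates g_i^t (from K_i local gradient-descent steps of rate η_l starting at θ_t) satisfy the perturbed alignment ⟨g_i^t/‖g_i^t‖, g_t⟩ = ρ_i + δ_{t,i} for residuals δ_{t,i} ∈ ℝ, and ‖g_t‖ ≤ G. Define R_t = (G_f + (L G_f/2) η_l (K_max − 1)) · Σ_{i=1}^N ρ_i |δ_{t,i}| and B_drift = (L G_f/2)(G + Σ_i ρ_i²). Then for any T ≥ 1: (1/T) Σ_{t=0}^{T−1} ‖∇F(θ_t)‖²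 ≤ (F(θ_0) − F⋆)/(c η_g T) + L η_g G²/(2c) + (B_drift/c) η_l (K_max − 1) + (1/(cT)) Σ_{t=0}^{T−1} R_t. -/
open scoped InnerProductSpace BigOperators

section Helpers

variable {E : Type*} [NormedAddCommGroup E] [InnerProductSpace ℝ E] [CompleteSpace E]

lemma craft_traj_drift (f : E → ℝ) (ηl Gf : ℝ) (hηl : 0 ≤ ηl)
    (hGf : ∀ x, ‖gradient f x‖ ≤ Gf) (θ : E) :
    ∀ k : ℕ, ‖traj f ηl θ k - θ‖ ≤ ηl * k * Gf := by
  intro k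
  induction k with
  | zero => simp [traj]
  | succ s ih =>
    have h1 : traj f ηl θ (s+1) - θ = (traj f ηl θ s - θ) - ηl • gradient f (traj f ηl θ s) := by
      rw [traj]; abel
    rw [h1]
    have h2 : ‖ηl • gradient f (traj f ηl θ s)‖ ≤ ηl * Gf := by
      rw [norm_smul, Real.norm_eq_abs, abs_of_nonneg hηl]
      exact mul_le_mul_of_nonneg_left (hGf _) hηl
    have h3 := norm_sub_le (traj f ηl θ s - θ) (ηl • gradient f (traj f ηl θ s))
    have : ηl * s * Gf + ηl * Gf = ηl * (s+1 : ℕ) * Gf := by push_cast; ring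
    linarith

lemma craft_sum_range_id_real (n : ℕ) :
    (∑ k ∈ Finset.range n, (k:ℝ)) = n * ((n:ℝ) - 1) / 2 := by
  induction n with
  | zero => simp
  | succ s ih => rw [Finset.sum_range_succ, ih]; push_cast; ring

lemma craft_grad_sum {N : ℕ} (f : Fin N → E → ℝ) (ρ : Fin N → ℝ)
    (hdiff : ∀ i, Differentiable ℝ (f i)) (x : E) :
    HasGradientAt (fun x => ∑ i, ρ i * f i x) (∑ i, ρ i • gradient (f i) x) x := by
  rw [hasGradientAt_iff_hasFDerivAt]
  have h : ∀ i ∈ Finset.univ, HasFDerivAt (fun x => ρ i * f i x)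
      (ρ i • (InnerProductSpace.toDual ℝ E (gradient (f i) x))) x := by
    intro i _
    exact (hasGradientAt_iff_hasFDerivAt.mp (hdiff i x).hasGradientAt).const_mul (ρ i)
  refine (HasFDerivAt.fun_sum h).congr_fderiv ?_
  simp [map_sum, map_smul]

lemma craft_descent (φ : E → ℝ) (L : ℝ) (hdiff : Differentiable ℝ φ)
    (hlip : ∀ x y, ‖gradient φ x - gradient φ y‖ ≤ L * ‖x - y‖) (x y : E) :
    φ y ≤ φ x + ⟪gradient φ x, y - x⟫_ℝ + L / 2 * ‖y - x‖ ^ 2 := by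
  set v := y - x with hv
  set ψ : ℝ → ℝ := fun t => φ (x + t • v) - t * ⟪gradient φ x, v⟫_ℝ - L * t ^ 2 / 2 * ‖v‖ ^ 2
    with hψ
  have hline : ∀ t : ℝ, HasDerivAt (fun t : ℝ => x + t • v) v t := by
    intro t
    simpa using ((hasDerivAt_id t).smul_const v).const_add x
  have hderiv : ∀ t : ℝ, HasDerivAt ψ
      (⟪gradient φ (x + t • v), v⟫_ℝ - ⟪gradient φ x, v⟫_ℝ - L * t * ‖v‖ ^ 2) t := by
    intro t
    have h1 : HasDerivAt (fun t : ℝ => φ (x + t • v)) (⟪gradient φ (x + t • v), v⟫_ℝ) t := by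
      have hF : HasFDerivAt φ (InnerProductSpace.toDual ℝ E (gradient φ (x + t • v)))
          (x + t • v) := hasGradientAt_iff_hasFDerivAt.mp (hdiff _).hasGradientAt
      exact (hF.comp_hasDerivAt t (hline t)).congr_deriv (by simp [InnerProductSpace.toDual_apply_apply])
    have h2 : HasDerivAt (fun t : ℝ => t * ⟪gradient φ x, v⟫_ℝ) (⟪gradient φ x, v⟫_ℝ) t := by
      simpa using (hasDerivAt_id t).mul_const (⟪gradient φ x, v⟫_ℝ)
    have h3 : HasDerivAt (fun t : ℝ => L * t ^ 2 / 2 * ‖v‖ ^ 2) (L * t * ‖v‖ ^ 2) t := by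
      have := ((hasDerivAt_pow 2 t).const_mul L).div_const 2 |>.mul_const (‖v‖ ^ 2)
      exact this.congr_deriv (by push_cast; ring)
    exact (h1.sub h2).sub h3
  have hmono : AntitoneOn ψ (Set.Icc (0:ℝ) 1) := by
    apply antitoneOn_of_deriv_nonpos (convex_Icc 0 1)
    · exact fun t ht => ((hderiv t).continuousAt).continuousWithinAt
    · intro t _
      exact ((hderiv t).differentiableAt).differentiableWithinAt
    · intro t ht
      rw [interior_Icc] at ht
      rw [(hderiv t).deriv]
      have h4 : ⟪gradient φ (x + t • v), v⟫_ℝ - ⟪gradient φ x, v⟫_ℝ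
          = ⟪gradient φ (x + t • v) - gradient φ x, v⟫_ℝ := by
        rw [inner_sub_left]
      rw [h4]
      have h5 := real_inner_le_norm (gradient φ (x + t • v) - gradient φ x) v
      have h6 : ‖gradient φ (x + t • v) - gradient φ x‖ ≤ L * (t * ‖v‖) := by
        have := hlip (x + t • v) x
        simpa [norm_smul, abs_of_pos ht.1, mul_assoc] using this
      nlinarith [norm_nonneg v, ht.1.le, mul_le_mul_of_nonneg_right h6 (norm_nonneg v)]
  have h01 := hmono (Set.left_mem_Icc.mpr zero_le_one) (Set.right_mem_Icc.mpr zero_le_one)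
    zero_le_one
  simp only [hψ] at h01
  simp only [zero_smul, add_zero, one_smul, one_pow, zero_pow, one_mul, zero_mul] at h01
  have hxy : x + v = y := by rw [hv]; abel
  rw [hxy] at h01
  nlinarith [h01]

end Helpers

set_option maxHeartbeats 1000000 in
/-- **Approximate alignment under residual constraints.**
If the aggregates satisfy the perturbed alignment constraints
`⟪gᵢᵗ/‖gᵢᵗ‖, g_t⟫ = ρᵢ + δ_{t,i}`, then the CRAFT convergence bound holds with the
additional residual term `(1/(cT)) Σ_{t<T} R_t`, where
`R_t = (G_f + (L G_f/2) η_l (K_max−1)) Σᵢ ρᵢ |δ_{t,i}|`. -/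
theorem craft_approximate_alignment {d N : ℕ} (hd : 1 ≤ d) (hN : 1 ≤ N)
    (f : Fin N → EuclideanSpace ℝ (Fin d) → ℝ) (L Gf : ℝ)
    (hdiff : ∀ i, Differentiable ℝ (f i))
    (hLip : ∀ i x y, ‖gradient (f i) x - gradient (f i) y‖ ≤ L * ‖x - y‖)
    (hGf : ∀ i x, ‖gradient (f i) x‖ ≤ Gf)
    (ρ : Fin N → ℝ) (hρpos : ∀ i, 0 < ρ i) (hρsum : ∑ i, ρ i = 1)
    (F : EuclideanSpace ℝ (Fin d) → ℝ) (hF : F = fun x => ∑ i, ρ i * f i x)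
    (Fstar : ℝ) (hFstar : ∀ x, Fstar ≤ F x)
    (ρmin : ℝ) (hρminlb : ∀ i, ρmin ≤ ρ i) (hρminmem : ∃ i, ρ i = ρmin)
    (c : ℝ) (hc : c = ρmin / Gf)
    (ηl ηg : ℝ) (hηl : 0 < ηl) (hηg : 0 < ηg)
    (K : Fin N → ℕ) (hK : ∀ i, 1 ≤ K i)
    (Kmax : ℕ) (hKmaxub : ∀ i, K i ≤ Kmax) (hKmaxmem : ∃ i, K i = Kmax)
    (θt : ℕ → EuclideanSpace ℝ (Fin d)) (g : ℕ → EuclideanSpace ℝ (Fin d))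
    (hstep : ∀ t, θt (t + 1) = θt t - ηg • g t)
    (gI : ℕ → Fin N → EuclideanSpace ℝ (Fin d))
    (hgI : ∀ t i, gI t i = ηl • ∑ k ∈ Finset.range (K i),
        gradient (f i) (traj (f i) ηl (θt t) k))
    (hne : ∀ t i, gI t i ≠ 0)
    (δ : ℕ → Fin N → ℝ)
    (halign : ∀ t i, ⟪‖gI t i‖⁻¹ • gI t i, g t⟫_ℝ = ρ i + δ t i)
    (G : ℝ) (hG : ∀ t, ‖g t‖ ≤ G)
    (R : ℕ → ℝ)
    (hR : ∀ t, R t = (Gf + L * Gf / 2 * (ηl * ((Kmax : ℝ) - 1))) * ∑ i, ρ i * |δ t i|)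
    (Bdrift : ℝ) (hB : Bdrift = L * Gf / 2 * (G + ∑ i, (ρ i) ^ 2))
    (T : ℕ) (hT : 1 ≤ T) :
    (1 / (T : ℝ)) * ∑ t ∈ Finset.range T, ‖gradient F (θt t)‖ ^ 2 ≤
      (F (θt 0) - Fstar) / (c * ηg * T) + L * ηg * G ^ 2 / (2 * c)
      + Bdrift / c * (ηl * ((Kmax : ℝ) - 1))
      + (1 / (c * T)) * ∑ t ∈ Finset.range T, R t := by
  -- basic positivity facts
  have i0 : Fin N := ⟨0, hN⟩
  have hGf0 : 0 ≤ Gf := le_trans (norm_nonneg _) (hGf i0 0)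
  have hL0 : 0 ≤ L := by
    have hy : ‖(EuclideanSpace.single (⟨0, hd⟩ : Fin d) (1:ℝ)) - 0‖ = 1 := by
      simp
    have := hLip i0 (EuclideanSpace.single (⟨0, hd⟩ : Fin d) (1:ℝ)) 0
    rw [hy] at this
    have h0 := norm_nonneg (gradient (f i0) (EuclideanSpace.single (⟨0, hd⟩ : Fin d) (1:ℝ))
      - gradient (f i0) 0)
    linarith
  have hGfpos : 0 < Gf := by
    rcases lt_or_eq_of_le hGf0 with h | h
    · exact h
    · exfalso
      have hz : ∀ i x, gradient (f i) x = 0 := by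
        intro i x
        have := hGf i x
        rw [← h] at this
        exact norm_le_zero_iff.mp this
      apply hne 0 i0
      rw [hgI]
      simp [hz]
  have hρmin : 0 < ρmin := by
    obtain ⟨i, hi⟩ := hρminmem
    rw [← hi]; exact hρpos i
  have hcpos : 0 < c := by rw [hc]; exact div_pos hρmin hGfpos
  have hG0 : 0 ≤ G := le_trans (norm_nonneg _) (hG 0)
  have hKmR : (1:ℝ) ≤ (Kmax:ℝ) := by
    obtain ⟨i, hi⟩ := hKmaxmem
    exact_mod_cast hi ▸ hK i
  set D : ℝ := L * Gf / 2 * (ηl * ((Kmax : ℝ) - 1)) with hDdef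
  have hD0 : 0 ≤ D := by
    apply mul_nonneg (by positivity)
    apply mul_nonneg hηl.le (by linarith)
  -- gradient of F
  have hgradF : ∀ x, gradient F x = ∑ i, ρ i • gradient (f i) x := by
    intro x
    rw [hF]
    exact (craft_grad_sum f ρ hdiff x).gradient
  have hFdiff : Differentiable ℝ F := by
    rw [hF]
    exact fun x => ((craft_grad_sum f ρ hdiff x).differentiableAt)
  have hFlip : ∀ x y, ‖gradient F x - gradient F y‖ ≤ L * ‖x - y‖ := by
    intro x y
    rw [hgradF, hgradF, ← Finset.sum_sub_distrib]
    calc ‖∑ i, (ρ i • gradient (f i) x - ρ i • gradient (f i) y)‖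
        ≤ ∑ i, ‖ρ i • gradient (f i) x - ρ i • gradient (f i) y‖ := norm_sum_le _ _
      _ ≤ ∑ i, ρ i * (L * ‖x - y‖) := by
          apply Finset.sum_le_sum
          intro i _
          rw [← smul_sub, norm_smul, Real.norm_eq_abs, abs_of_pos (hρpos i)]
          exact mul_le_mul_of_nonneg_left (hLip i x y) (hρpos i).le
      _ = L * ‖x - y‖ := by rw [← Finset.sum_mul, hρsum, one_mul]
  have hgradFle : ∀ x, ‖gradient F x‖ ≤ Gf := by
    intro x
    rw [hgradF]
    calc ‖∑ i, ρ i • gradient (f i) x‖ ≤ ∑ i, ‖ρ i • gradient (f i) x‖ := norm_sum_le _ _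
      _ ≤ ∑ i, ρ i * Gf := by
          apply Finset.sum_le_sum
          intro i _
          rw [norm_smul, Real.norm_eq_abs, abs_of_pos (hρpos i)]
          exact mul_le_mul_of_nonneg_left (hGf i x) (hρpos i).le
      _ = Gf := by rw [← Finset.sum_mul, hρsum, one_mul]
  -- key per-round inequality
  have key : ∀ t, c * ‖gradient F (θt t)‖ ^ 2 ≤
      ⟪gradient F (θt t), g t⟫_ℝ + Bdrift * (ηl * ((Kmax:ℝ) - 1)) + R t := by
    intro t
    set x := θt t with hx
    -- per client objects
    have hIi : ∀ i, ρ i ^ 2 * ‖gradient (f i) x‖ - ρ i ^ 2 * D - Gf * (ρ i * |δ t i|)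
        - ρ i * (D * G) ≤ ρ i * ⟪gradient (f i) x, g t⟫_ℝ := by
      intro i
      set S : EuclideanSpace ℝ (Fin d) :=
        ∑ k ∈ Finset.range (K i), gradient (f i) (traj (f i) ηl x k) with hS
      set Ei : EuclideanSpace ℝ (Fin d) :=
        ∑ k ∈ Finset.range (K i), (gradient (f i) (traj (f i) ηl x k) - gradient (f i) x)
        with hEi
      have hKpos : (0:ℝ) < (K i : ℝ) := by exact_mod_cast hK i
      have hKle : (K i : ℝ) ≤ (Kmax : ℝ) := by exact_mod_cast hKmaxub i
      -- inner product of S with g t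
      have hSg : ⟪S, g t⟫_ℝ = ‖S‖ * (ρ i + δ t i) := by
        have h1 := halign t i
        have hn : ‖gI t i‖ ≠ 0 := norm_ne_zero_iff.mpr (hne t i)
        rw [real_inner_smul_left] at h1
        have h2 : ⟪gI t i, g t⟫_ℝ = ‖gI t i‖ * (ρ i + δ t i) :=
          (inv_mul_eq_iff_eq_mul₀ hn).mp h1
        have h3 : gI t i = ηl • S := by rw [hgI]
        rw [h3, real_inner_smul_left, norm_smul, Real.norm_eq_abs, abs_of_pos hηl] at h2
        have := mul_left_cancel₀ (ne_of_gt hηl) (by linarith [h2] : ηl * ⟪S, g t⟫_ℝ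
          = ηl * (‖S‖ * (ρ i + δ t i)))
        exact this
      -- decomposition of the inner product
      have hdecomp : ⟪S, g t⟫_ℝ = (K i : ℝ) * ⟪gradient (f i) x, g t⟫_ℝ + ⟪Ei, g t⟫_ℝ := by
        rw [hS, hEi, sum_inner, sum_inner]
        simp only [inner_sub_left]
        rw [Finset.sum_sub_distrib]
        simp [Finset.sum_const, Finset.card_range]
      -- bound on Ei
      have hEb : ‖Ei‖ ≤ (K i : ℝ) * D := by
        calc ‖Ei‖ ≤ ∑ k ∈ Finset.range (K i),
            ‖gradient (f i) (traj (f i) ηl x k) - gradient (f i) x‖ := norm_sum_le _ _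
          _ ≤ ∑ k ∈ Finset.range (K i), (L * ηl * Gf) * (k : ℝ) := by
              apply Finset.sum_le_sum
              intro k _
              calc ‖gradient (f i) (traj (f i) ηl x k) - gradient (f i) x‖
                  ≤ L * ‖traj (f i) ηl x k - x‖ := hLip i _ _
                _ ≤ L * (ηl * k * Gf) := by
                    apply mul_le_mul_of_nonneg_left _ hL0
                    exact craft_traj_drift (f i) ηl Gf hηl.le (hGf i) x k
                _ = (L * ηl * Gf) * (k : ℝ) := by ring
          _ = (L * ηl * Gf) * ((K i : ℝ) * ((K i : ℝ) - 1) / 2) := by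
              rw [← Finset.mul_sum, craft_sum_range_id_real]
          _ ≤ (K i : ℝ) * D := by
              rw [hDdef]
              have hnn : 0 ≤ L * ηl * Gf * (K i : ℝ) / 2 := by positivity
              nlinarith [hnn, hKle]
      -- bound on S norm from above and below
      have hSub : ‖S‖ ≤ (K i : ℝ) * Gf := by
        calc ‖S‖ ≤ ∑ k ∈ Finset.range (K i), ‖gradient (f i) (traj (f i) ηl x k)‖ :=
            norm_sum_le _ _
          _ ≤ ∑ k ∈ Finset.range (K i), Gf := Finset.sum_le_sum fun k _ => hGf i _
          _ = (K i : ℝ) * Gf := by simp [mul_comm]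
      have hSeq : S = (K i : ℝ) • gradient (f i) x + Ei := by
        rw [hEi, Finset.sum_sub_distrib, Finset.sum_const, Finset.card_range, hS]
        rw [← Nat.cast_smul_eq_nsmul ℝ]
        abel
      have hSlb : (K i : ℝ) * ‖gradient (f i) x‖ - ‖Ei‖ ≤ ‖S‖ := by
        have h1 : (K i : ℝ) * ‖gradient (f i) x‖ = ‖(K i : ℝ) • gradient (f i) x‖ := by
          rw [norm_smul, Real.norm_eq_abs, abs_of_pos hKpos]
        have h2 : ‖(K i : ℝ) • gradient (f i) x‖ ≤ ‖S‖ + ‖Ei‖ := by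
          have : (K i : ℝ) • gradient (f i) x = S - Ei := by rw [hSeq]; abel
          rw [this]
          exact norm_sub_le _ _
        linarith
      -- inner product of Ei with g
      have hPb : |⟪Ei, g t⟫_ℝ| ≤ ‖Ei‖ * G := by
        calc |⟪Ei, g t⟫_ℝ| ≤ ‖Ei‖ * ‖g t‖ := abs_real_inner_le_norm _ _
          _ ≤ ‖Ei‖ * G := mul_le_mul_of_nonneg_left (hG t) (norm_nonneg _)
      -- now assemble, multiplied by K i
      have hkeyK : (K i : ℝ) * (ρ i ^ 2 * ‖gradient (f i) x‖ - ρ i ^ 2 * D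
          - Gf * (ρ i * |δ t i|) - ρ i * (D * G))
          ≤ (K i : ℝ) * (ρ i * ⟪gradient (f i) x, g t⟫_ℝ) := by
        have hrhs : (K i : ℝ) * (ρ i * ⟪gradient (f i) x, g t⟫_ℝ)
            = ρ i * (‖S‖ * (ρ i + δ t i) - ⟪Ei, g t⟫_ℝ) := by
          rw [← hSg, hdecomp]; ring
        rw [hrhs]
        have hρi := hρpos i
        have habs := abs_nonneg (δ t i)
        have hSnn := norm_nonneg S
        have hEnn := norm_nonneg Ei
        have hA1 : ρ i ^ 2 * ((K i : ℝ) * ‖gradient (f i) x‖ - ‖Ei‖) ≤ ρ i ^ 2 * ‖S‖ :=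
          mul_le_mul_of_nonneg_left hSlb (sq_nonneg _)
        have hA2 : ρ i ^ 2 * ‖Ei‖ ≤ ρ i ^ 2 * ((K i : ℝ) * D) :=
          mul_le_mul_of_nonneg_left hEb (sq_nonneg _)
        have hA3 : ‖S‖ * |δ t i| ≤ ((K i : ℝ) * Gf) * |δ t i| :=
          mul_le_mul_of_nonneg_right hSub habs
        have hA4 : -(‖S‖ * |δ t i|) ≤ ‖S‖ * δ t i := by
          have := neg_abs_le (‖S‖ * δ t i)
          rwa [abs_mul, abs_of_nonneg hSnn] at this
        have hA5 : ⟪Ei, g t⟫_ℝ ≤ ((K i : ℝ) * D) * G := by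
          have h1 : ⟪Ei, g t⟫_ℝ ≤ ‖Ei‖ * G := le_trans (le_abs_self _) hPb
          have h2 : ‖Ei‖ * G ≤ ((K i : ℝ) * D) * G := mul_le_mul_of_nonneg_right hEb hG0
          linarith
        nlinarith [mul_le_mul_of_nonneg_left hA3 hρi.le, mul_le_mul_of_nonneg_left hA4 hρi.le,
          mul_le_mul_of_nonneg_left hA5 hρi.le]
      exact le_of_mul_le_mul_left hkeyK hKpos
    -- sum over clients
    have hinner : ⟪gradient F x, g t⟫_ℝ = ∑ i, ρ i * ⟪gradient (f i) x, g t⟫_ℝ := by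
      rw [hgradF, sum_inner]
      exact Finset.sum_congr rfl fun i _ => real_inner_smul_left _ _ _
    have hsum : ∑ i, (ρ i ^ 2 * ‖gradient (f i) x‖ - ρ i ^ 2 * D - Gf * (ρ i * |δ t i|)
        - ρ i * (D * G)) ≤ ⟪gradient F x, g t⟫_ℝ := by
      rw [hinner]
      exact Finset.sum_le_sum fun i _ => hIi i
    have hsplit : ∑ i, (ρ i ^ 2 * ‖gradient (f i) x‖ - ρ i ^ 2 * D - Gf * (ρ i * |δ t i|)
        - ρ i * (D * G))
        = (∑ i, ρ i ^ 2 * ‖gradient (f i) x‖) - (∑ i, ρ i ^ 2) * D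
          - Gf * (∑ i, ρ i * |δ t i|) - D * G := by
      rw [Finset.sum_sub_distrib, Finset.sum_sub_distrib, Finset.sum_sub_distrib,
        ← Finset.sum_mul, ← Finset.mul_sum, ← Finset.sum_mul, hρsum, one_mul]
    -- lower bound of the gradient sum
    have hc2 : c * ‖gradient F x‖ ^ 2 ≤ ∑ i, ρ i ^ 2 * ‖gradient (f i) x‖ := by
      have hnorm_le : ‖gradient F x‖ ≤ ∑ i, ρ i * ‖gradient (f i) x‖ := by
        rw [hgradF]
        refine (norm_sum_le _ _).trans (le_of_eq ?_)
        apply Finset.sum_congr rfl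
        intro i _
        rw [norm_smul, Real.norm_eq_abs, abs_of_pos (hρpos i)]
      have h1 : ρmin * ‖gradient F x‖ ≤ ∑ i, ρ i ^ 2 * ‖gradient (f i) x‖ := by
        calc ρmin * ‖gradient F x‖ ≤ ρmin * ∑ i, ρ i * ‖gradient (f i) x‖ :=
            mul_le_mul_of_nonneg_left hnorm_le hρmin.le
          _ = ∑ i, ρmin * (ρ i * ‖gradient (f i) x‖) := Finset.mul_sum _ _ _
          _ ≤ ∑ i, ρ i * (ρ i * ‖gradient (f i) x‖) := by
              apply Finset.sum_le_sum
              intro i _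
              exact mul_le_mul_of_nonneg_right (hρminlb i)
                (mul_nonneg (hρpos i).le (norm_nonneg _))
          _ = ∑ i, ρ i ^ 2 * ‖gradient (f i) x‖ := by
              apply Finset.sum_congr rfl
              intro i _
              ring
      have h2 : c * ‖gradient F x‖ ^ 2 ≤ ρmin * ‖gradient F x‖ := by
        have hn := norm_nonneg (gradient F x)
        have hle := hgradFle x
        have hcGf : c * Gf = ρmin := by rw [hc]; field_simp
        nlinarith [mul_nonneg hcpos.le hn]
      linarith
    -- residual bound
    have hRb : Gf * (∑ i, ρ i * |δ t i|) ≤ R t := by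
      rw [hR]
      have hs0 : 0 ≤ ∑ i, ρ i * |δ t i| :=
        Finset.sum_nonneg fun i _ => mul_nonneg (hρpos i).le (abs_nonneg _)
      nlinarith
    have hBeq : Bdrift * (ηl * ((Kmax:ℝ) - 1)) = (∑ i, ρ i ^ 2) * D + D * G := by
      rw [hB, hDdef]; ring
    rw [hsplit] at hsum
    linarith
  -- descent per step
  have hdesc : ∀ t, c * ηg * ‖gradient F (θt t)‖ ^ 2 ≤
      F (θt t) - F (θt (t+1)) + L / 2 * ηg ^ 2 * G ^ 2
      + ηg * (Bdrift * (ηl * ((Kmax:ℝ) - 1))) + ηg * R t := by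
    intro t
    rw [hstep t]
    have hd := craft_descent F L hFdiff hFlip (θt t) (θt t - ηg • g t)
    have h1 : θt t - ηg • g t - θt t = -(ηg • g t) := by abel
    rw [h1, inner_neg_right, real_inner_smul_right, norm_neg, norm_smul, Real.norm_eq_abs,
      abs_of_pos hηg] at hd
    have hg2 : ‖g t‖ ^ 2 ≤ G ^ 2 := pow_le_pow_left₀ (norm_nonneg _) (hG t) 2
    have hkt := key t
    have hmul := mul_le_mul_of_nonneg_left hkt hηg.le
    have hsq : (ηg * ‖g t‖) ^ 2 = ηg ^ 2 * ‖g t‖ ^ 2 := by ring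
    rw [hsq] at hd
    have hLg : L / 2 * (ηg ^ 2 * ‖g t‖ ^ 2) ≤ L / 2 * ηg ^ 2 * G ^ 2 := by
      have : L / 2 * (ηg ^ 2 * ‖g t‖ ^ 2) = (L / 2 * ηg ^ 2) * ‖g t‖ ^ 2 := by ring
      rw [this]
      exact mul_le_mul_of_nonneg_left hg2 (by positivity)
    nlinarith [hmul, hd, hLg]
  -- sum over rounds
  have hteles : ∑ t ∈ Finset.range T, (F (θt t) - F (θt (t+1))) = F (θt 0) - F (θt T) :=
    Finset.sum_range_sub' (fun t => F (θt t)) T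
  have hsumineq : c * ηg * ∑ t ∈ Finset.range T, ‖gradient F (θt t)‖ ^ 2 ≤
      (F (θt 0) - Fstar) + T * (L / 2 * ηg ^ 2 * G ^ 2)
      + T * (ηg * (Bdrift * (ηl * ((Kmax:ℝ) - 1)))) + ηg * ∑ t ∈ Finset.range T, R t := by
    calc c * ηg * ∑ t ∈ Finset.range T, ‖gradient F (θt t)‖ ^ 2
        = ∑ t ∈ Finset.range T, c * ηg * ‖gradient F (θt t)‖ ^ 2 := Finset.mul_sum _ _ _
      _ ≤ ∑ t ∈ Finset.range T, (F (θt t) - F (θt (t+1)) + L / 2 * ηg ^ 2 * G ^ 2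
          + ηg * (Bdrift * (ηl * ((Kmax:ℝ) - 1))) + ηg * R t) :=
          Finset.sum_le_sum fun t _ => hdesc t
      _ = (F (θt 0) - F (θt T)) + T * (L / 2 * ηg ^ 2 * G ^ 2)
          + T * (ηg * (Bdrift * (ηl * ((Kmax:ℝ) - 1)))) + ηg * ∑ t ∈ Finset.range T, R t := by
          rw [← hteles]
          rw [Finset.sum_add_distrib, Finset.sum_add_distrib, Finset.sum_add_distrib,
            Finset.sum_const, Finset.sum_const, Finset.card_range, ← Finset.mul_sum]
          push_cast
          ring
      _ ≤ (F (θt 0) - Fstar) + T * (L / 2 * ηg ^ 2 * G ^ 2)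
          + T * (ηg * (Bdrift * (ηl * ((Kmax:ℝ) - 1)))) + ηg * ∑ t ∈ Finset.range T, R t := by
          have := hFstar (θt T)
          linarith
  -- final algebra
  have hTpos : (0:ℝ) < T := by exact_mod_cast hT
  have hfact : (1 / (T:ℝ)) * ∑ t ∈ Finset.range T, ‖gradient F (θt t)‖ ^ 2
      = (1 / (c * ηg * T)) * (c * ηg * ∑ t ∈ Finset.range T, ‖gradient F (θt t)‖ ^ 2) := by
    field_simp
  rw [hfact]
  calc (1 / (c * ηg * T)) * (c * ηg * ∑ t ∈ Finset.range T, ‖gradient F (θt t)‖ ^ 2)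
      ≤ (1 / (c * ηg * T)) * ((F (θt 0) - Fstar) + T * (L / 2 * ηg ^ 2 * G ^ 2)
        + T * (ηg * (Bdrift * (ηl * ((Kmax:ℝ) - 1)))) + ηg * ∑ t ∈ Finset.range T, R t) :=
        mul_le_mul_of_nonneg_left hsumineq (by positivity)
    _ = (F (θt 0) - Fstar) / (c * ηg * T) + L * ηg * G ^ 2 / (2 * c)
        + Bdrift / c * (ηl * ((Kmax : ℝ) - 1))
        + (1 / (c * T)) * ∑ t ∈ Finset.range T, R t := by
        field_simp
end
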